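/- Let q, β > 0, n ∈ ℕ, and s ∈ ℕ. If f ∈ C^s(ℝ) with f^{(k)} bounded for k = 0,…,s, then B_n(f) is s-times differentiable and (B_n(f))^{(s)}(x) = B_n(f^{(s)})(x) for all x ∈ ℝ. -/

import Mathlib

open MeasureTheory Filter Real Set

noncomputable def nu (q β x : ℝ) : ℝ :=
  (1 - q * Real.exp (-β * x)) / (1 + q * Real.exp (-β * x))

noncomputable def G (q β x : ℝ) : ℝ := (1/4) * (nu q β (x+1) - nu q β (x-1))

noncomputable def Psi (q β x : ℝ) : ℝ := (G q β x + G (1/q) β x) / 2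

noncomputable def B (q β : ℝ) (n : ℕ) (f : ℝ → ℝ) (x : ℝ) : ℝ :=
  ∫ h : ℝ, f (x - h / n) * Psi q β h

lemma denom_pos {q : ℝ} (hq : 0 < q) (β x : ℝ) : 0 < 1 + q * Real.exp (-β * x) := by
  positivity

lemma nu_cont {q : ℝ} (hq : 0 < q) (β : ℝ) : Continuous (nu q β) := by
  apply Continuous.div (by continuity) (by continuity)
  intro x
  exact ne_of_gt (denom_pos hq β x)

lemma Psi_cont {q : ℝ} (hq : 0 < q) (β : ℝ) : Continuous (Psi q β) := by
  have h1 : Continuous (G q β) := by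
    unfold G
    exact continuous_const.mul (((nu_cont hq β).comp (by continuity)).sub
      ((nu_cont hq β).comp (by continuity)))
  have h2 : Continuous (G (1/q) β) := by
    unfold G
    have hq' : (0:ℝ) < 1/q := by positivity
    exact continuous_const.mul (((nu_cont hq' β).comp (by continuity)).sub
      ((nu_cont hq' β).comp (by continuity)))
  unfold Psi
  exact (h1.add h2).div_const 2

lemma G_eq {q : ℝ} (hq : 0 < q) (β x : ℝ) :
    G q β x = (q * Real.exp (-β*(x-1)) - q * Real.exp (-β*(x+1))) /
      (2 * ((1 + q * Real.exp (-β*(x+1))) * (1 + q * Real.exp (-β*(x-1))))) := by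
  have h1 := denom_pos hq β (x+1)
  have h2 := denom_pos hq β (x-1)
  unfold G nu
  field_simp
  ring

lemma G_bound {q β : ℝ} (hq : 0 < q) (hβ : 0 < β) (x : ℝ) :
    |G q β x| ≤ ((q + 1/q) * Real.exp β) * Real.exp (-β * |x|) := by
  have h1 := denom_pos hq β (x+1)
  have h2 := denom_pos hq β (x-1)
  set Q1 := q * Real.exp (-β*(x+1)) with hQ1def
  set Q2 := q * Real.exp (-β*(x-1)) with hQ2def
  have hQ1 : 0 < Q1 := by positivity
  have hQ2 : 0 < Q2 := by positivity
  have hle : Q1 ≤ Q2 := by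
    apply mul_le_mul_of_nonneg_left _ hq.le
    apply Real.exp_le_exp.2
    nlinarith
  have hQ2eq : Q2 = q * Real.exp β * Real.exp (-β * x) := by
    rw [hQ2def, show -β*(x-1) = β + -β*x by ring, Real.exp_add]
    ring
  have hD : 0 < 2 * ((1 + Q1) * (1 + Q2)) := by positivity
  rw [G_eq hq, abs_div, abs_of_nonneg (by linarith : (0:ℝ) ≤ Q2 - Q1), abs_of_pos hD]
  rcases le_or_gt 0 x with hx | hx
  · rw [abs_of_nonneg hx]
    have key : (Q2 - Q1) / (2 * ((1 + Q1) * (1 + Q2))) ≤ Q2 - Q1 :=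
      div_le_self (by linarith) (by nlinarith)
    have : Q2 - Q1 ≤ ((q + 1/q) * Real.exp β) * Real.exp (-β * x) := by
      rw [hQ2eq] at hle ⊢
      have hx1 : 0 < Real.exp (-β * x) := Real.exp_pos _
      have hx2 : 0 < Real.exp β := Real.exp_pos _
      have hq' : 0 < 1/q := by positivity
      nlinarith
    linarith
  · rw [abs_of_neg hx, show -β * -x = β * x by ring]
    have key : (Q2 - Q1) / (2 * ((1 + Q1) * (1 + Q2))) ≤ 1 / (2 * Q1) := by
      rw [div_le_div_iff₀ hD (by positivity)]
      nlinarith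
    have heq : 1 / (2 * Q1) = (Real.exp β / (2*q)) * Real.exp (β * x) := by
      rw [hQ1def, show -β*(x+1) = -(β*x) + -β by ring, Real.exp_add, Real.exp_neg (β*x),
        Real.exp_neg β]
      have e1 : Real.exp (β*x) ≠ 0 := (Real.exp_pos _).ne'
      have e2 : Real.exp β ≠ 0 := (Real.exp_pos _).ne'
      field_simp
    have hfin : (Real.exp β / (2*q)) * Real.exp (β * x) ≤
        ((q + 1/q) * Real.exp β) * Real.exp (β * x) := by
      apply mul_le_mul_of_nonneg_right _ (Real.exp_pos _).le
      have hx2 : 0 < Real.exp β := Real.exp_pos _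
      rw [div_le_iff₀ (by positivity)]
      have hqq : (1/q) * q = 1 := by field_simp
      nlinarith [mul_nonneg (sq_nonneg q) hx2.le, hqq, mul_pos hx2 hq]
    rw [heq] at key
    linarith

lemma Psi_bound {q β : ℝ} (hq : 0 < q) (hβ : 0 < β) (x : ℝ) :
    |Psi q β x| ≤ ((q + 1/q) * Real.exp β) * Real.exp (-β * |x|) := by
  have h1 := G_bound hq hβ x
  have h2 := G_bound (show (0:ℝ) < 1/q by positivity) hβ x
  rw [one_div_one_div, add_comm (1/q)] at h2
  have := abs_add_le (G q β x) (G (1/q) β x)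
  unfold Psi
  rw [abs_div, abs_two]
  linarith

lemma exp_abs_integrable {β : ℝ} (hβ : 0 < β) :
    Integrable (fun x : ℝ => Real.exp (-β * |x|)) := by
  have h1 : IntegrableOn (fun x : ℝ => Real.exp (-β * |x|)) (Ioi 0) := by
    apply (exp_neg_integrableOn_Ioi 0 hβ).congr_fun _ measurableSet_Ioi
    intro x hx
    show Real.exp (-β * x) = Real.exp (-β * |x|)
    rw [abs_of_pos hx]
  have h2 : IntegrableOn (fun x : ℝ => Real.exp (-β * |x|)) (Iio 0) := by
    rw [← (Measure.measurePreserving_neg (volume : Measure ℝ)).integrableOn_comp_preimage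
        (Homeomorph.neg ℝ).measurableEmbedding]
    simp only [Function.comp_def, abs_neg, neg_preimage, neg_Iio, neg_neg, neg_zero]
    exact h1
  have hsplit : Iio (0:ℝ) ∪ Ici 0 = univ := Iio_union_Ici
  rw [← integrableOn_univ, ← hsplit, integrableOn_union, integrableOn_Ici_iff_integrableOn_Ioi]
  exact ⟨h2, h1⟩

lemma Psi_integrable {q β : ℝ} (hq : 0 < q) (hβ : 0 < β) : Integrable (Psi q β) := by
  apply Integrable.mono' ((exp_abs_integrable hβ).const_mul ((q + 1/q) * Real.exp β))
    (Psi_cont hq β).aestronglyMeasurable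
  filter_upwards with x
  exact Psi_bound hq hβ x

lemma B_integrand_integrable {q β : ℝ} (hq : 0 < q) (hβ : 0 < β) (n : ℕ) {f : ℝ → ℝ}
    (hf : Continuous f) {M : ℝ} (hM : ∀ y, |f y| ≤ M) (x : ℝ) :
    Integrable (fun h : ℝ => f (x - h / n) * Psi q β h) := by
  apply Integrable.mono' (((Psi_integrable hq hβ).norm.const_mul M))
  · exact ((hf.comp (by continuity)).mul (Psi_cont hq β)).aestronglyMeasurable
  · filter_upwards with h
    rw [Real.norm_eq_abs, abs_mul]
    have := abs_nonneg (Psi q β h)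
    have := hM (x - h/n)
    have h0 : 0 ≤ M := le_trans (abs_nonneg _) (hM 0)
    rw [Real.norm_eq_abs]
    nlinarith

lemma B_continuous {q β : ℝ} (hq : 0 < q) (hβ : 0 < β) (n : ℕ) {f : ℝ → ℝ}
    (hf : Continuous f) {M : ℝ} (hM : ∀ y, |f y| ≤ M) : Continuous (B q β n f) := by
  rw [continuous_iff_continuousAt]
  intro x₀
  apply continuousAt_of_dominated (bound := fun h => M * |Psi q β h|)
  · filter_upwards with x
    exact ((hf.comp (by continuity)).mul (Psi_cont hq β)).aestronglyMeasurable
  · filter_upwards with x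
    filter_upwards with h
    rw [Real.norm_eq_abs, abs_mul]
    have := abs_nonneg (Psi q β h)
    have := hM (x - h/n)
    have h0 : 0 ≤ M := le_trans (abs_nonneg _) (hM 0)
    nlinarith
  · exact (Psi_integrable hq hβ).abs.const_mul M
  · filter_upwards with h
    exact (((hf.comp (by continuity)).mul continuous_const).continuousAt)

lemma B_hasDerivAt {q β : ℝ} (hq : 0 < q) (hβ : 0 < β) (n : ℕ) {f : ℝ → ℝ}
    (hf : ContDiff ℝ 1 f) {M0 M1 : ℝ} (hM0 : ∀ y, |f y| ≤ M0) (hM1 : ∀ y, |deriv f y| ≤ M1)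
    (x₀ : ℝ) : HasDerivAt (B q β n f) (B q β n (deriv f) x₀) x₀ := by
  have hfc : Continuous f := hf.continuous
  have hfd : Differentiable ℝ f := hf.differentiable one_ne_zero
  have hfc' : Continuous (deriv f) := hf.continuous_deriv le_rfl
  have key := hasDerivAt_integral_of_dominated_loc_of_deriv_le (μ := (volume : Measure ℝ))
    (F := fun x h => f (x - h / n) * Psi q β h)
    (F' := fun x h => deriv f (x - h / n) * Psi q β h)
    (bound := fun h => M1 * |Psi q β h|) (x₀ := x₀) (Metric.ball_mem_nhds x₀ one_pos)
    ?_ ?_ ?_ ?_ ?_ ?_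
  · exact key.2
  · filter_upwards with x
    exact ((hfc.comp (by continuity)).mul (Psi_cont hq β)).aestronglyMeasurable
  · exact B_integrand_integrable hq hβ n hfc hM0 x₀
  · exact ((hfc'.comp (by continuity)).mul (Psi_cont hq β)).aestronglyMeasurable
  · filter_upwards with h
    intro x _
    rw [Real.norm_eq_abs, abs_mul]
    have := abs_nonneg (Psi q β h)
    have := hM1 (x - h/n)
    have h0 : 0 ≤ M1 := le_trans (abs_nonneg _) (hM1 0)
    nlinarith
  · exact (Psi_integrable hq hβ).abs.const_mul M1
  · filter_upwards with h
    intro x _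
    have hinner : HasDerivAt (fun y : ℝ => y - h / n) 1 x := (hasDerivAt_id x).sub_const _
    have houter : HasDerivAt f (deriv f (x - h/n)) (x - h/n) :=
      (hfd (x - h/n)).hasDerivAt
    have := (houter.comp x hinner).mul_const (Psi q β h)
    simpa using this

theorem B_iterated_deriv (q β : ℝ) (hq : 0 < q) (hβ : 0 < β) (n : ℕ) (s : ℕ)
    (f : ℝ → ℝ) (hf : ContDiff ℝ s f)
    (hfb : ∀ k ≤ s, ∃ M : ℝ, ∀ x : ℝ, |iteratedDeriv k f x| ≤ M) :
    ContDiff ℝ s (B q β n f) ∧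
    ∀ x : ℝ, iteratedDeriv s (B q β n f) x = B q β n (iteratedDeriv s f) x := by
  induction s generalizing f with
  | zero =>
    obtain ⟨M0, hM0⟩ := hfb 0 le_rfl
    simp only [iteratedDeriv_zero] at hM0
    refine ⟨?_, fun x => by simp only [iteratedDeriv_zero]⟩
    have : ContDiff ℝ 0 (B q β n f) := by
      rw [contDiff_zero]
      exact B_continuous hq hβ n hf.continuous hM0
    exact_mod_cast this
  | succ s ih =>
    have hf' : ContDiff ℝ ((s : ℕ∞) + 1) f := by exact_mod_cast hf
    obtain ⟨hfdiff, hfan, hfderiv'⟩ := contDiff_succ_iff_deriv.mp hf'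
    have hfderiv : ContDiff ℝ (s : ℕ∞) (deriv f) := by exact_mod_cast hfderiv'
    obtain ⟨M0, hM0⟩ := hfb 0 (Nat.zero_le _)
    obtain ⟨M1, hM1⟩ := hfb 1 (by omega)
    simp only [iteratedDeriv_zero] at hM0
    rw [show (1:ℕ) = 0 + 1 by rfl] at hM1
    simp only [iteratedDeriv_succ', iteratedDeriv_zero] at hM1
    have hf1 : ContDiff ℝ 1 f := hf'.of_le le_add_self
    have hD : ∀ x, HasDerivAt (B q β n f) (B q β n (deriv f) x) x :=
      fun x => B_hasDerivAt hq hβ n hf1 hM0 hM1 x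
    have hderivB : deriv (B q β n f) = B q β n (deriv f) := funext fun x => (hD x).deriv
    have hfb' : ∀ k ≤ s, ∃ M : ℝ, ∀ x, |iteratedDeriv k (deriv f) x| ≤ M := by
      intro k hk
      obtain ⟨M, hM⟩ := hfb (k+1) (by omega)
      exact ⟨M, fun x => by rw [← iteratedDeriv_succ']; exact hM x⟩
    obtain ⟨ihc, ihe⟩ := ih (deriv f) hfderiv hfb'
    constructor
    · have : ContDiff ℝ ((s : ℕ∞) + 1) (B q β n f) := contDiff_succ_iff_deriv.mpr
        ⟨fun x => (hD x).differentiableAt, fun h => by simp at h,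
          by rw [hderivB]; exact_mod_cast ihc⟩
      exact_mod_cast this
    · intro x
      rw [iteratedDeriv_succ', iteratedDeriv_succ', hderivB, ihe x]
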